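/- Let D be a digraph of order n ≥ 3 containing a cycle C of length n−1 with y the vertex not on C. If D contains no Hamiltonian bypass, then d^+(y) ≤ (n−1)/2, d^-(y) ≤ (n−1)/2, and d(y) ≤ n−1. -/

import Mathlib

open Finset

/-- A list of distinct vertices whose consecutive members are joined by arcs. -/
def IsPathList {V : Type*} (A : V → V → Prop) (p : List V) : Prop :=
  p.Nodup ∧ p.Chain' A

/-- A directed cycle: at least two distinct vertices, consecutive arcs, and an arc
from the last vertex back to the first. -/
def IsCycleList {V : Type*} (A : V → V → Prop) (c : List V) : Prop :=
  2 ≤ c.length ∧ c.Nodup ∧ c.Chain' A ∧ ∀ h : c ≠ [], A (c.getLast h) (c.head h)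

/-- A Hamiltonian bypass: a Hamiltonian path `v₁ v₂ … vₙ` together with the arc `v₁ vₙ`. -/
def HasHamBypass {V : Type*} (A : V → V → Prop) : Prop :=
  ∃ l : List V, l.Nodup ∧ (∀ v, v ∈ l) ∧ l.Chain' A ∧
    ∀ h : l ≠ [], A (l.head h) (l.getLast h)

/-- A Hamiltonian cycle. -/
def HasHamCycle {V : Type*} (A : V → V → Prop) : Prop :=
  ∃ c : List V, IsCycleList A c ∧ ∀ v, v ∈ c

/-- out-degree of `x` towards a set `S`. -/
def outDegOn {V : Type*} [DecidableEq V] (A : V → V → Prop) [DecidableRel A]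
    (x : V) (S : Finset V) : ℕ := (S.filter fun y => A x y).card

/-- in-degree of `x` from a set `S`. -/
def inDegOn {V : Type*} [DecidableEq V] (A : V → V → Prop) [DecidableRel A]
    (x : V) (S : Finset V) : ℕ := (S.filter fun y => A y x).card

/-- degree of `x` with respect to a set `S` (arcs in both directions). -/
def degOn {V : Type*} [DecidableEq V] (A : V → V → Prop) [DecidableRel A]
    (x : V) (S : Finset V) : ℕ := outDegOn A x S + inDegOn A x S

/-- out-degree of `x`. -/
def outDeg {V : Type*} [Fintype V] [DecidableEq V] (A : V → V → Prop) [DecidableRel A]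
    (x : V) : ℕ := outDegOn A x Finset.univ

/-- in-degree of `x`. -/
def inDeg {V : Type*} [Fintype V] [DecidableEq V] (A : V → V → Prop) [DecidableRel A]
    (x : V) : ℕ := inDegOn A x Finset.univ

/-- degree of `x`. -/
def deg {V : Type*} [Fintype V] [DecidableEq V] (A : V → V → Prop) [DecidableRel A]
    (x : V) : ℕ := outDeg A x + inDeg A x

/-- The condition `A_k` of Manoussakis: for every triple of distinct vertices `x, y, z`
with `x` and `y` non-adjacent, if `xz` is not an arc then
`d(x)+d(y)+d⁺(x)+d⁻(z) ≥ 3n-2+k`, and if `zx` is not an arc then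
`d(x)+d(y)+d⁻(x)+d⁺(z) ≥ 3n-2+k`. -/
def CondA {V : Type*} [Fintype V] [DecidableEq V] (A : V → V → Prop) [DecidableRel A]
    (k : ℤ) : Prop :=
  ∀ x y z : V, x ≠ y → z ≠ x → z ≠ y → ¬A x y → ¬A y x →
    (¬A x z → (deg A x + deg A y + outDeg A x + inDeg A z : ℤ) ≥
      3 * (Fintype.card V : ℤ) - 2 + k) ∧
    (¬A z x → (deg A x + deg A y + inDeg A x + outDeg A z : ℤ) ≥
      3 * (Fintype.card V : ℤ) - 2 + k)


section Aux

variable {V : Type*} {A : V → V → Prop}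

lemma get_congr {c : List V} {x y : ℕ} (hx : x < c.length) (hxy : x = y) :
    c.get ⟨x, hx⟩ = c.get ⟨y, hxy ▸ hx⟩ := by subst hxy; rfl

lemma cyc_arc {c : List V} (hc : IsCycleList A c) {a : ℕ} (ha : a < c.length) :
    A (c.get ⟨a, ha⟩) (c.get ⟨(a + 1) % c.length, Nat.mod_lt _ (by omega)⟩) := by
  obtain ⟨hlen2, hnd, hch, hcyc⟩ := hc
  have hne : c ≠ [] := by intro h; simp [h] at hlen2
  rcases Nat.lt_or_ge (a + 1) c.length with h | h
  · have h2 : A (c.get ⟨a, by omega⟩) (c.get ⟨a + 1, h⟩) := List.isChain_iff_getElem.1 hch a (by omega)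
    rwa [get_congr _ (Nat.mod_eq_of_lt h).symm] at h2
  · have haa : a = c.length - 1 := by omega
    have h0 : (a + 1) % c.length = 0 := by
      rw [haa, Nat.sub_add_cancel (by omega), Nat.mod_self]
    have h2 := hcyc hne
    rw [List.getLast_eq_getElem, List.head_eq_getElem_zero] at h2
    rw [get_congr _ haa, get_congr _ h0]
    exact h2

lemma rot_get {c : List V} {k j : ℕ} (hk : k < c.length) (hj : j < (c.rotate k).length) :
    (c.rotate k).get ⟨j, hj⟩ =
      c.get ⟨(j + k) % c.length, Nat.mod_lt _ (by omega)⟩ := by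
  simp [List.getElem_rotate]

lemma rot_chain {c : List V} (hc : IsCycleList A c) {k : ℕ} (hk : k < c.length) :
    (c.rotate k).Chain' A := by
  show List.IsChain A _
  rw [List.isChain_iff_getElem]
  intro i hi
  have hm : (c.rotate k).length = c.length := c.length_rotate k
  rw [hm] at hi
  show A ((c.rotate k).get ⟨i, by omega⟩) ((c.rotate k).get ⟨i + 1, by omega⟩)
  rw [rot_get hk, rot_get hk]
  have ha : (i + k) % c.length < c.length := Nat.mod_lt _ (by omega)
  have h2 := cyc_arc hc ha
  have heq : ((i + k) % c.length + 1) % c.length = (i + 1 + k) % c.length := by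
    rw [Nat.mod_add_mod]; congr 1; omega
  rwa [get_congr _ heq] at h2

lemma rot_head {c : List V} {k : ℕ} (hk : k < c.length)
    (h : c.rotate k ≠ []) : (c.rotate k).head h = c.get ⟨k, hk⟩ := by
  rw [List.head_eq_getElem_zero, List.getElem_rotate]
  exact get_congr _ (by simpa using Nat.mod_eq_of_lt hk)

lemma rot_last {c : List V} {k : ℕ} (hk : k < c.length)
    (h : c.rotate k ≠ []) :
    (c.rotate k).getLast h =
      c.get ⟨(c.length - 1 + k) % c.length, Nat.mod_lt _ (by omega)⟩ := by
  rw [List.getLast_eq_getElem, List.getElem_rotate]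
  exact get_congr _ (by rw [c.length_rotate])

/-- index shift used for the "previous" vertex. -/
lemma last_idx {m a : ℕ} (hm : 0 < m) (ha : a < m) :
    (m - 1 + (a + 1) % m) % m = a := by
  rcases Nat.lt_or_ge (a + 1) m with h | h
  · rw [Nat.mod_eq_of_lt h, show m - 1 + (a + 1) = m + a by omega,
      Nat.add_mod_left, Nat.mod_eq_of_lt ha]
  · have ham : a + 1 = m := by omega
    rw [ham, Nat.mod_self, Nat.add_zero, Nat.mod_eq_of_lt (by omega)]
    omega

variable [Fintype V] [DecidableEq V] [DecidableRel A]

lemma cover {c : List V} (hnd : c.Nodup) (hlen : c.length = Fintype.card V - 1)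
    (hn : 3 ≤ Fintype.card V) {y : V} (hy : y ∉ c) (v : V) : v = y ∨ v ∈ c := by
  have h1 : (insert y c.toFinset).card = Fintype.card V := by
    rw [Finset.card_insert_of_notMem (by simpa using hy),
      List.toFinset_card_of_nodup hnd]
    omega
  have h2 : insert y c.toFinset = Finset.univ := Finset.eq_univ_of_card _ h1
  have h3 : v ∈ insert y c.toFinset := h2 ▸ Finset.mem_univ v
  simpa using h3

/-- counting: no two cyclically consecutive indices. -/
lemma count_lem {m : ℕ} [NeZero m] (S : Finset (Fin m))
    (h : ∀ i ∈ S, i + 1 ∉ S) : 2 * S.card ≤ m := by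
  have hinj : (S.image (fun i => i + 1)).card = S.card :=
    Finset.card_image_of_injective _ (add_left_injective 1)
  have hdis : Disjoint S (S.image (fun i => i + 1)) := by
    rw [Finset.disjoint_right]
    intro a ha haS
    obtain ⟨i, hi, rfl⟩ := Finset.mem_image.1 ha
    exact h i hi haS
  calc 2 * S.card = S.card + (S.image (fun i => i + 1)).card := by omega
    _ = (S ∪ S.image (fun i => i + 1)).card := (Finset.card_union_of_disjoint hdis).symm
    _ ≤ Fintype.card (Fin m) := Finset.card_le_univ _
    _ = m := Fintype.card_fin m

/-- the filtered vertex set has the same card as the index set. -/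
lemma deg_card {c : List V} (hnd : c.Nodup) {y : V} (P : V → Prop) [DecidablePred P]
    (hPy : ¬P y) (hcov : ∀ v, v = y ∨ v ∈ c) :
    (Finset.univ.filter P).card =
      (Finset.univ.filter fun i : Fin c.length => P (c.get i)).card := by
  refine (Finset.card_bij (fun i _ => c.get i) ?_ ?_ ?_).symm
  · intro a ha
    simp only [Finset.mem_filter, Finset.mem_univ, true_and] at ha ⊢
    exact ha
  · intro a _ b _ hab
    exact List.nodup_iff_injective_get.1 hnd hab
  · intro b hb
    simp only [Finset.mem_filter, Finset.mem_univ, true_and] at hb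
    have hbc : b ∈ c := by
      rcases hcov b with rfl | h
      · exact absurd hb hPy
      · exact h
    obtain ⟨i, hi⟩ := List.mem_iff_get.1 hbc
    refine ⟨i, ?_, hi⟩
    simp only [Finset.mem_filter, Finset.mem_univ, true_and]
    exact hi.symm ▸ hb

end Aux

/-- Lemma 7(ii). -/
theorem stmt8 {V : Type*} [Fintype V] [DecidableEq V] (A : V → V → Prop) [DecidableRel A]
    (hirr : ∀ v, ¬A v v) (hn : 3 ≤ Fintype.card V)
    (c : List V) (hc : IsCycleList A c) (hlen : c.length = Fintype.card V - 1)
    (y : V) (hy : y ∉ c)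
    (hnb : ¬HasHamBypass A) :
    2 * outDeg A y ≤ Fintype.card V - 1 ∧ 2 * inDeg A y ≤ Fintype.card V - 1 ∧
      deg A y ≤ Fintype.card V - 1 := by
  obtain ⟨hlen2, hnd, hch, hcyc⟩ := hc
  set m := c.length with hm
  have hm2 : 2 ≤ m := hlen2
  have hm0 : 0 < m := by omega
  haveI : NeZero m := ⟨by omega⟩
  have hcov := cover hnd hlen hn hy
  have hcne : c ≠ [] := List.ne_nil_of_length_pos (hm ▸ hm0)
  -- no two cyclically consecutive out-neighbours
  have hout : ∀ (a : ℕ) (ha : a < m),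
      A y (c.get ⟨a, ha⟩) → A y (c.get ⟨(a + 1) % m, Nat.mod_lt _ hm0⟩) → False := by
    intro a ha h1 h2
    set k := (a + 1) % m with hk
    have hkm : k < m := Nat.mod_lt _ hm0
    have hrne : c.rotate k ≠ [] := by
      intro h; have := c.length_rotate k; rw [h] at this; simp at this; omega
    apply hnb
    refine ⟨y :: c.rotate k, ?_, ?_, ?_, ?_⟩
    · rw [List.nodup_cons]
      exact ⟨fun h => hy (List.mem_rotate.1 h), List.nodup_rotate.2 hnd⟩
    · intro v
      rcases hcov v with rfl | h
      · exact List.mem_cons_self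
      · exact List.mem_cons_of_mem _ (List.mem_rotate.2 h)
    · show List.IsChain A _
      rw [List.isChain_cons]
      refine ⟨?_, rot_chain ⟨hlen2, hnd, hch, hcyc⟩ hkm⟩
      intro z hz
      rw [List.head?_eq_head hrne] at hz
      rw [rot_head hkm] at hz
      rw [← Option.some_inj.1 hz]
      exact h2
    · intro h
      rw [List.head_cons, List.getLast_cons hrne, rot_last hkm,
        get_congr _ (last_idx hm0 ha)]
      exact h1
  -- no two cyclically consecutive in-neighbours
  have hin : ∀ (a : ℕ) (ha : a < m),
      A (c.get ⟨a, ha⟩) y → A (c.get ⟨(a + 1) % m, Nat.mod_lt _ hm0⟩) y → False := by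
    intro a ha h1 h2
    set k := (a + 1) % m with hk
    have hkm : k < m := Nat.mod_lt _ hm0
    have hrne : c.rotate k ≠ [] := by
      intro h; have := c.length_rotate k; rw [h] at this; simp at this; omega
    apply hnb
    refine ⟨c.rotate k ++ [y], ?_, ?_, ?_, ?_⟩
    · rw [List.nodup_append]
      exact ⟨List.nodup_rotate.2 hnd, List.nodup_singleton y,
        by intro x hx z hz hxz; rw [List.mem_singleton] at hz; rw [hxz, hz] at hx
           exact hy (List.mem_rotate.1 hx)⟩
    · intro v
      rcases hcov v with rfl | h
      · simp
      · exact List.mem_append_left _ (List.mem_rotate.2 h)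
    · show List.IsChain A _
      rw [List.isChain_append]
      refine ⟨rot_chain ⟨hlen2, hnd, hch, hcyc⟩ hkm, List.isChain_singleton y, ?_⟩
      intro x hx z hz
      rw [List.getLast?_eq_getLast hrne] at hx
      rw [rot_last hkm, get_congr _ (last_idx hm0 ha)] at hx
      simp only [List.head?_cons, Option.mem_def, Option.some_inj] at hz
      rw [← Option.some_inj.1 hx, ← hz]
      exact h1
    · intro h
      rw [List.head_append_of_ne_nil hrne, rot_head hkm, List.getLast_append]
      exact h2
  -- convert to Fin-set statements
  have houtF : ∀ i : Fin m, i ∈ (Finset.univ.filter fun i : Fin m => A y (c.get i)) →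
      i + 1 ∉ (Finset.univ.filter fun i : Fin m => A y (c.get i)) := by
    intro i hi hi1
    simp only [Finset.mem_filter, Finset.mem_univ, true_and] at hi hi1
    apply hout i.1 i.2 hi
    have hv : ((i + 1 : Fin m) : ℕ) = (i.1 + 1) % m := by
      rw [Fin.add_def]
      simp [Nat.add_mod, Nat.mod_mod_of_dvd]
    rwa [show (⟨(i.1 + 1) % m, Nat.mod_lt _ hm0⟩ : Fin m) = i + 1 from
      Fin.ext hv.symm]
  have hinF : ∀ i : Fin m, i ∈ (Finset.univ.filter fun i : Fin m => A (c.get i) y) →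
      i + 1 ∉ (Finset.univ.filter fun i : Fin m => A (c.get i) y) := by
    intro i hi hi1
    simp only [Finset.mem_filter, Finset.mem_univ, true_and] at hi hi1
    apply hin i.1 i.2 hi
    have hv : ((i + 1 : Fin m) : ℕ) = (i.1 + 1) % m := by
      rw [Fin.add_def]
      simp [Nat.add_mod, Nat.mod_mod_of_dvd]
    rwa [show (⟨(i.1 + 1) % m, Nat.mod_lt _ hm0⟩ : Fin m) = i + 1 from
      Fin.ext hv.symm]
  have hout2 : 2 * outDeg A y ≤ m := by
    rw [outDeg, outDegOn, deg_card hnd (fun v => A y v) (hirr y) hcov]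
    exact count_lem _ houtF
  have hin2 : 2 * inDeg A y ≤ m := by
    rw [inDeg, inDegOn, deg_card hnd (fun v => A v y) (hirr y) hcov]
    exact count_lem _ hinF
  have hmle : m = Fintype.card V - 1 := hlen
  refine ⟨by omega, by omega, by rw [deg]; omega⟩
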